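/- Let A be an m×n matrix defining a feasible tropical linear system, and let A' be a matrix obtained from A by appending one additional row that is a tropical linear combination of rows of A, i.e., row a' satisfies a' j = min over i of (A i j + c i) for some constants c : Fin m → ℝ, where m ≥ 2 and for every j the minimum defining a' j is attained at least twice. Then every solution of A is a solution of A'. -/

import Mathlib

/-- `x` is a solution of the tropical linear system defined by `A`: for every row `i`,
the minimum of `A i j + x j` over `j` is attained at at least two distinct indices. -/
def IsSolution {m n : ℕ} (A : Matrix (Fin m) (Fin n) ℝ) (x : Fin n → ℝ) : Prop :=
  ∀ i : Fin m, ∃ j₁ j₂ : Fin n, j₁ ≠ j₂ ∧ (∀ j, A i j₁ + x j₁ ≤ A i j + x j) ∧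
    A i j₁ + x j₁ = A i j₂ + x j₂

theorem stmt17 {m n : ℕ} (hm : 2 ≤ m) (A : Matrix (Fin m) (Fin n) ℝ)
    (hfeas : ∃ x : Fin n → ℝ, IsSolution A x)
    (c : Fin m → ℝ) (a' : Fin n → ℝ)
    (hmin : ∀ j, ∀ i, a' j ≤ A i j + c i)
    (htwo : ∀ j, ∃ i₁ i₂ : Fin m, i₁ ≠ i₂ ∧ a' j = A i₁ j + c i₁ ∧
      A i₁ j + c i₁ = A i₂ j + c i₂) :
    ∀ x : Fin n → ℝ, IsSolution A x →
      IsSolution (Matrix.of (Fin.snoc A a') : Matrix (Fin (m + 1)) (Fin n) ℝ) x := by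
  intro x hx i
  refine Fin.lastCases ?_ ?_ i
  · -- new row a'
    have hn : Nonempty (Fin n) := by
      obtain ⟨j₁, -, -, -⟩ := hx ⟨0, by omega⟩
      exact ⟨j₁⟩
    obtain ⟨j₀, -, hj₀⟩ := Finset.exists_min_image Finset.univ (fun j => a' j + x j)
      ⟨Classical.arbitrary (Fin n), Finset.mem_univ _⟩
    obtain ⟨i₁, i₂, -, ha1, -⟩ := htwo j₀
    obtain ⟨k₁, k₂, hkne, hk1min, hk12⟩ := hx i₁
    have key : ∀ k, A i₁ k + x k = A i₁ k₁ + x k₁ → a' k + x k = a' j₀ + x j₀ := by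
      intro k hk
      have h1 : a' k ≤ A i₁ k + c i₁ := hmin k i₁
      have h2 : A i₁ k₁ + x k₁ ≤ A i₁ j₀ + x j₀ := hk1min j₀
      have h3 : a' j₀ + x j₀ ≤ a' k + x k := hj₀ k (Finset.mem_univ _)
      linarith
    have e1 := key k₁ rfl
    have e2 := key k₂ hk12.symm
    refine ⟨k₁, k₂, hkne, ?_, ?_⟩
    · intro j
      simp only [Matrix.of_apply, Fin.snoc, Fin.val_last, lt_irrefl, dite_false, cast_eq]
      have := hj₀ j (Finset.mem_univ _)
      linarith
    · simp only [Matrix.of_apply, Fin.snoc, Fin.val_last, lt_irrefl, dite_false, cast_eq]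
      linarith
  · intro i
    obtain ⟨j₁, j₂, hne, hmin', heq⟩ := hx i
    refine ⟨j₁, j₂, hne, ?_, ?_⟩ <;>
      simp only [Matrix.of_apply, Fin.snoc, Fin.coe_castSucc, Fin.is_lt, dite_true, Fin.castLT_castSucc, cast_eq]
    · exact hmin'
    · exact heq
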